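/- Let ν_k denote, for each integer k ≥ 1, the unique solution in ((k−1)π/2, kπ/2) of μ sin(2μ) = 2 cos(2μ). Then lim_{k→∞} 2 ( ∫_{−1}^{0} sin²(ν_{2k−1}(x+1)) dx + tan²(ν_{2k−1}) ∫_{0}^{1} cos²(ν_{2k−1}(x−1)) dx + sin²(ν_{2k−1}) ) = 1 and lim_{k→∞} 2 ( cot²(ν_{2k}) ∫_{−1}^{0} sin²(ν_{2k}(x+1)) dx + ∫_{0}^{1} cos²(ν_{2k}(x−1)) dx + cos²(ν_{2k}) ) = 1. -/

import Mathlib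

open Real Set Filter


lemma int_sin_part (μ : ℝ) (hμ : μ ≠ 0) :
    (∫ x in (-1:ℝ)..0, Real.sin (μ * (x + 1)) ^ 2)
      = 1/2 - Real.sin μ * Real.cos μ / (2*μ) := by
  have h1 : (∫ x in (-1:ℝ)..0, Real.sin (μ * (x + 1)) ^ 2)
      = ∫ x in (0:ℝ)..1, Real.sin (μ * x) ^ 2 := by
    have := intervalIntegral.integral_comp_add_right (a := (-1:ℝ)) (b := 0)
      (fun y => Real.sin (μ * y) ^ 2) 1
    norm_num at this ⊢
    convert this using 2
  have h2 : (∫ x in (0:ℝ)..1, Real.sin (μ * x) ^ 2)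
      = μ⁻¹ • ∫ x in (0:ℝ)..μ, Real.sin x ^ 2 := by
    have := intervalIntegral.integral_comp_mul_left (a := (0:ℝ)) (b := 1)
      (fun y => Real.sin y ^ 2) hμ
    simpa using this
  rw [h1, h2, integral_sin_sq]
  field_simp
  have hinv : μ * μ⁻¹ = 1 := mul_inv_cancel₀ hμ
  rw [Real.sin_zero]; linear_combination (μ - Real.sin μ * Real.cos μ) * hinv

lemma int_cos_part (μ : ℝ) (hμ : μ ≠ 0) :
    (∫ x in (0:ℝ)..1, Real.cos (μ * (x - 1)) ^ 2)
      = 1/2 + Real.sin μ * Real.cos μ / (2*μ) := by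
  have h1 : (∫ x in (0:ℝ)..1, Real.cos (μ * (x - 1)) ^ 2)
      = ∫ x in (-1:ℝ)..0, Real.cos (μ * x) ^ 2 := by
    have := intervalIntegral.integral_comp_sub_right (a := (0:ℝ)) (b := 1)
      (fun y => Real.cos (μ * y) ^ 2) 1
    norm_num at this ⊢
    convert this using 2
  have h2 : (∫ x in (-1:ℝ)..0, Real.cos (μ * x) ^ 2)
      = μ⁻¹ • ∫ x in (-μ:ℝ)..0, Real.cos x ^ 2 := by
    have := intervalIntegral.integral_comp_mul_left (a := (-1:ℝ)) (b := 0)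
      (fun y => Real.cos y ^ 2) hμ
    simpa using this
  rw [h1, h2, integral_cos_sq]
  simp [Real.sin_neg, Real.cos_neg]
  field_simp
  ring



lemma core_facts (μ : ℝ) (hμ : 1 ≤ μ)
    (heq : μ * Real.sin (2*μ) = 2 * Real.cos (2*μ)) :
    Real.cos (2*μ) ^ 2 * (μ^2 + 4) = μ^2 ∧
    Real.sin μ * Real.cos μ * μ = Real.cos (2*μ) ∧
    Real.sin μ ^ 2 = (1 - Real.cos (2*μ))/2 ∧
    Real.cos μ ^ 2 = (1 + Real.cos (2*μ))/2 := by
  have hp := Real.sin_sq_add_cos_sq (2*μ)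
  have hp2 := Real.sin_sq_add_cos_sq μ
  have hs2 := Real.sin_two_mul μ
  have hc2 := Real.cos_two_mul' (μ)
  refine ⟨by nlinarith [heq, hp], by nlinarith [heq, hs2], by nlinarith [hc2, hp2],
    by nlinarith [hc2, hp2]⟩

/-- Abstract algebraic bound used for both parities. -/
lemma abs_bound_abstract (μ C T D s2 : ℝ) (hμ : 1 ≤ μ) (hCpos : 0 < C) (hC1 : C ≤ 1)
    (hT0 : 0 ≤ T) (hTle : T * μ^2 ≤ 4) (hDval : D * (2*μ^2) = C)
    (hs0 : 0 ≤ s2) (hsle : s2 * μ^2 ≤ 2) :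
    |2 * ((1/2 - D) + T * (1/2 + D) + s2) - 1| ≤ 13/μ := by
  have hμ0 : (0:ℝ) < μ := by linarith
  have hμ2 : (0:ℝ) < μ^2 := by positivity
  have hT4 : T ≤ 4 := by nlinarith
  have hexp : (2 * ((1/2 - D) + T * (1/2 + D) + s2) - 1) * μ^2
      = -C + T*μ^2 + T*C + 2*(s2 * μ^2) := by linear_combination (T - 1) * hDval
  have hTC : T * C ≤ 4 := by nlinarith
  have hTC0 : 0 ≤ T * C := mul_nonneg hT0 hCpos.le
  have hTm0 : 0 ≤ T * μ^2 := mul_nonneg hT0 hμ2.le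
  have hsm0 : 0 ≤ s2 * μ^2 := mul_nonneg hs0 hμ2.le
  have hup : (2 * ((1/2 - D) + T * (1/2 + D) + s2) - 1) * μ^2 ≤ 13 := by
    rw [hexp]; linarith
  have hlo : -13 ≤ (2 * ((1/2 - D) + T * (1/2 + D) + s2) - 1) * μ^2 := by
    rw [hexp]; linarith
  have hdivle : (13:ℝ)/μ^2 ≤ 13/μ := by
    rw [div_le_div_iff₀ hμ2 hμ0]; nlinarith
  rw [abs_le]
  constructor
  · have h1 : (-13:ℝ)/μ^2 ≤ _ := (div_le_iff₀ hμ2).2 hlo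
    have h2 : -(13/μ) ≤ (-13:ℝ)/μ^2 := by rw [neg_div]; linarith
    linarith
  · have h1 : _ ≤ (13:ℝ)/μ^2 := (le_div_iff₀ hμ2).2 hup
    linarith

lemma bound_odd (μ : ℝ) (hμ : 1 ≤ μ)
    (heq : μ * Real.sin (2*μ) = 2 * Real.cos (2*μ))
    (hs : 0 < Real.sin (2*μ)) :
    |2 * ((1/2 - Real.sin μ * Real.cos μ / (2*μ)) +
      Real.tan μ ^ 2 * (1/2 + Real.sin μ * Real.cos μ / (2*μ)) +
      Real.sin μ ^ 2) - 1| ≤ 13/μ := by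
  obtain ⟨hc2, hsc, hsin2, hcos2⟩ := core_facts μ hμ heq
  have hμ0 : (0:ℝ) < μ := by linarith
  have hμ2 : (0:ℝ) < μ^2 := by positivity
  have hCpos : 0 < Real.cos (2*μ) := by nlinarith
  have hC1 : Real.cos (2*μ) ≤ 1 := Real.cos_le_one _
  have h1mc : (1 - Real.cos (2*μ)) * μ^2 ≤ 4 := by nlinarith
  have h1pC : (0:ℝ) < 1 + Real.cos (2*μ) := by linarith
  have hcospos : (0:ℝ) < Real.cos μ ^ 2 := by rw [hcos2]; linarith
  have hcosne : Real.cos μ ≠ 0 := by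
    intro h; rw [h] at hcospos; norm_num at hcospos
  have htan : Real.tan μ ^ 2 = (1 - Real.cos (2*μ))/(1 + Real.cos (2*μ)) := by
    rw [Real.tan_eq_sin_div_cos, div_pow, hsin2, hcos2]
    field_simp
  apply abs_bound_abstract μ (Real.cos (2*μ)) _ _ _ hμ hCpos hC1 (sq_nonneg _)
  · rw [htan]
    rw [div_mul_eq_mul_div, div_le_iff₀ h1pC]
    nlinarith
  · field_simp
    nlinarith [hsc]
  · exact sq_nonneg _
  · rw [hsin2]; nlinarith

lemma bound_even (μ : ℝ) (hμ : 1 ≤ μ)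
    (heq : μ * Real.sin (2*μ) = 2 * Real.cos (2*μ))
    (hs : Real.sin (2*μ) < 0) :
    |2 * (Real.cot μ ^ 2 * (1/2 - Real.sin μ * Real.cos μ / (2*μ)) +
      (1/2 + Real.sin μ * Real.cos μ / (2*μ)) +
      Real.cos μ ^ 2) - 1| ≤ 13/μ := by
  obtain ⟨hc2, hsc, hsin2, hcos2⟩ := core_facts μ hμ heq
  have hμ0 : (0:ℝ) < μ := by linarith
  have hμ2 : (0:ℝ) < μ^2 := by positivity
  have hCneg : Real.cos (2*μ) < 0 := by nlinarith
  have hC1 : -1 ≤ Real.cos (2*μ) := Real.neg_one_le_cos _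
  have h1pc : (1 + Real.cos (2*μ)) * μ^2 ≤ 4 := by nlinarith
  have h1mC : (0:ℝ) < 1 - Real.cos (2*μ) := by linarith
  have hsinpos : (0:ℝ) < Real.sin μ ^ 2 := by rw [hsin2]; linarith
  have hsinne : Real.sin μ ≠ 0 := by
    intro h; rw [h] at hsinpos; norm_num at hsinpos
  have hcot : Real.cot μ ^ 2 = (1 + Real.cos (2*μ))/(1 - Real.cos (2*μ)) := by
    rw [Real.cot_eq_cos_div_sin, div_pow, hsin2, hcos2]
    field_simp
  have h := abs_bound_abstract μ (-Real.cos (2*μ)) (Real.cot μ ^ 2)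
    (-(Real.sin μ * Real.cos μ / (2*μ))) (Real.cos μ ^ 2) hμ
    (by linarith) (by linarith) (sq_nonneg _)
    (by
      rw [hcot, div_mul_eq_mul_div, div_le_iff₀ h1mC]
      nlinarith)
    (by field_simp; nlinarith [hsc])
    (sq_nonneg _)
    (by rw [hcos2]; nlinarith)
  have hrw : 2 * (Real.cot μ ^ 2 * (1/2 - Real.sin μ * Real.cos μ / (2*μ)) +
      (1/2 + Real.sin μ * Real.cos μ / (2*μ)) + Real.cos μ ^ 2) - 1
      = 2 * ((1/2 - -(Real.sin μ * Real.cos μ / (2*μ))) +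
        Real.cot μ ^ 2 * (1/2 + -(Real.sin μ * Real.cos μ / (2*μ))) +
        Real.cos μ ^ 2) - 1 := by ring
  rw [hrw]
  exact h

lemma sin_two_mul_pos_odd (j : ℕ) (μ : ℝ)
    (h1 : ((2*j:ℕ):ℝ) * π / 2 < μ) (h2 : μ < ((2*j+1:ℕ):ℝ) * π / 2) :
    0 < Real.sin (2*μ) := by
  have hπ := Real.pi_pos
  push_cast at h1 h2
  have key : Real.sin (2*μ) = Real.sin (2*μ - (j:ℝ) * (2*π)) := by
    rw [← Real.sin_add_nat_mul_two_pi (2*μ - (j:ℝ) * (2*π)) j]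
    ring_nf
  rw [key]
  apply Real.sin_pos_of_pos_of_lt_pi <;> nlinarith

lemma sin_two_mul_neg_even (j : ℕ) (μ : ℝ)
    (h1 : ((2*j+1:ℕ):ℝ) * π / 2 < μ) (h2 : μ < ((2*j+2:ℕ):ℝ) * π / 2) :
    Real.sin (2*μ) < 0 := by
  have hπ := Real.pi_pos
  push_cast at h1 h2
  have key : Real.sin (2*μ) = -Real.sin (2*μ - (2*j+1:ℝ) * π) := by
    rw [← Real.sin_add_pi (2*μ - (2*j+1:ℝ)*π)]
    rw [← Real.sin_add_nat_mul_two_pi (2*μ - (2*j+1:ℝ)*π + π) j]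
    ring_nf
  rw [key, neg_lt, neg_zero]
  apply Real.sin_pos_of_pos_of_lt_pi <;> nlinarith

theorem neumann_eigenvectors_asymptotically_normalized (ν : ℕ → ℝ)
    (hν : ∀ k : ℕ, 1 ≤ k → ν k ∈ Ioo ((((k : ℝ)) - 1) * π / 2) (((k : ℝ)) * π / 2) ∧
      ν k * Real.sin (2 * ν k) = 2 * Real.cos (2 * ν k)) :
    Tendsto (fun k : ℕ =>
      2 * ((∫ x in (-1 : ℝ)..0, Real.sin (ν (2 * k - 1) * (x + 1)) ^ 2) +
        Real.tan (ν (2 * k - 1)) ^ 2 *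
          (∫ x in (0 : ℝ)..1, Real.cos (ν (2 * k - 1) * (x - 1)) ^ 2) +
        Real.sin (ν (2 * k - 1)) ^ 2)) atTop (nhds 1) ∧
    Tendsto (fun k : ℕ =>
      2 * (Real.cot (ν (2 * k)) ^ 2 *
          (∫ x in (-1 : ℝ)..0, Real.sin (ν (2 * k) * (x + 1)) ^ 2) +
        (∫ x in (0 : ℝ)..1, Real.cos (ν (2 * k) * (x - 1)) ^ 2) +
        Real.cos (ν (2 * k)) ^ 2)) atTop (nhds 1) := by
  have hπ3 := Real.pi_gt_three
  have hg : Tendsto (fun k : ℕ => 1 - 13/(k:ℝ)) atTop (nhds 1) := by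
    have := tendsto_const_nhds (x := (1:ℝ)) (f := atTop (α := ℕ))
    simpa using this.sub (tendsto_const_div_atTop_nhds_zero_nat 13)
  have hh : Tendsto (fun k : ℕ => 1 + 13/(k:ℝ)) atTop (nhds 1) := by
    have := tendsto_const_nhds (x := (1:ℝ)) (f := atTop (α := ℕ))
    simpa using this.add (tendsto_const_div_atTop_nhds_zero_nat 13)
  constructor
  · apply tendsto_of_tendsto_of_tendsto_of_le_of_le' hg hh <;>
    · filter_upwards [eventually_ge_atTop 2] with k hk
      obtain ⟨j, rfl⟩ : ∃ j, k = j + 2 := ⟨k - 2, by omega⟩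
      have hm : 2 * (j + 2) - 1 = 2*(j+1) + 1 := by omega
      rw [hm]
      set μ := ν (2*(j+1)+1) with hμdef
      obtain ⟨⟨hlo, hhi⟩, heq⟩ := hν (2*(j+1)+1) (by omega)
      have hcast : ((2*(j+1)+1 : ℕ):ℝ) = 2*(j:ℝ) + 3 := by push_cast; ring
      rw [hcast] at hlo hhi
      have hsgn : 0 < Real.sin (2*μ) := by
        apply sin_two_mul_pos_odd (j+1) μ <;> push_cast <;>
          [linarith [hlo]; linarith [hhi]]
      have hμ1 : 1 ≤ μ := by nlinarith
      have hμk : ((j:ℝ) + 2) ≤ μ := by nlinarith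
      have hμ0 : μ ≠ 0 := by intro h; rw [h] at hμ1; norm_num at hμ1
      have hb := bound_odd μ hμ1 heq hsgn
      rw [int_sin_part μ hμ0, int_cos_part μ hμ0]
      rw [abs_le] at hb
      have hkpos : (0:ℝ) < (j:ℝ) + 2 := by positivity
      have hdiv : 13/μ ≤ 13/((j:ℝ)+2) :=
        div_le_div_of_nonneg_left (by norm_num) hkpos hμk
      push_cast
      linarith [hb.1, hb.2, hdiv]
  · apply tendsto_of_tendsto_of_tendsto_of_le_of_le' hg hh <;>
    · filter_upwards [eventually_ge_atTop 1] with k hk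
      obtain ⟨j, rfl⟩ : ∃ j, k = j + 1 := ⟨k - 1, by omega⟩
      set μ := ν (2*(j+1)) with hμdef
      obtain ⟨⟨hlo, hhi⟩, heq⟩ := hν (2*(j+1)) (by omega)
      have hcast : ((2*(j+1) : ℕ):ℝ) = 2*(j:ℝ) + 2 := by push_cast; ring
      rw [hcast] at hlo hhi
      have hsgn : Real.sin (2*μ) < 0 := by
        apply sin_two_mul_neg_even j μ <;> push_cast <;>
          [linarith [hlo]; linarith [hhi]]
      have hμ1 : 1 ≤ μ := by nlinarith
      have hμk : ((j:ℝ) + 1) ≤ μ := by nlinarith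
      have hμ0 : μ ≠ 0 := by intro h; rw [h] at hμ1; norm_num at hμ1
      have hb := bound_even μ hμ1 heq hsgn
      rw [int_sin_part μ hμ0, int_cos_part μ hμ0]
      rw [abs_le] at hb
      have hkpos : (0:ℝ) < (j:ℝ) + 1 := by positivity
      have hdiv : 13/μ ≤ 13/((j:ℝ)+1) :=
        div_le_div_of_nonneg_left (by norm_num) hkpos hμk
      push_cast
      linarith [hb.1, hb.2, hdiv]
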